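/- Let R be an irreducible crystallographic root system spanning a finite-dimensional real vector space V, with fixed base of simple roots {α_i}, fundamental Weyl chamber C_f and positive cone C⁺. Then the fundamental Weyl chamber is contained in the positive cone: every v ∈ V with ⟨α_i^∨, v⟩ ≥ 0 for all i is a nonnegative real linear combination of the simple roots, i.e. C_f ⊆ C⁺. -/

import Mathlib

/-- A finite crystallographic root system in a real vector space `V`, together with a fixed
base of simple roots indexed by `ι` (which form a basis of `V`). For each root `α`, the
coroot `α^∨` is recorded as a linear functional on `V` with `⟨α^∨, α⟩ = 2`, such that
the reflection `v ↦ v - ⟨α^∨, v⟩ • α` preserves the root set, and all Cartan pairings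
`⟨α^∨, β⟩` are integers. Every root is a nonnegative or nonpositive combination of the
simple roots. -/
structure RootSystemWithBase (ι V : Type*) [Fintype ι] [AddCommGroup V] [Module ℝ V] where
  /-- the set of roots -/
  R : Set V
  finR : R.Finite
  /-- the coroot `α^∨ ∈ V*` of a root `α` (junk value off `R`) -/
  coroot : V → V →ₗ[ℝ] ℝ
  coroot_self : ∀ α ∈ R, coroot α α = 2
  reflect_mem : ∀ α ∈ R, ∀ β ∈ R, β - coroot α β • α ∈ R
  crystallographic : ∀ α ∈ R, ∀ β ∈ R, ∃ n : ℤ, coroot α β = (n : ℝ)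
  /-- the simple roots, forming a basis of `V` -/
  simple : Module.Basis ι ℝ V
  simple_mem : ∀ i, simple i ∈ R
  base_prop : ∀ α ∈ R, (∀ i, 0 ≤ simple.repr α i) ∨ (∀ i, simple.repr α i ≤ 0)

namespace RootSystemWithBase

variable {ι V : Type*} [Fintype ι] [AddCommGroup V] [Module ℝ V]
  (P : RootSystemWithBase ι V)

/-- The Weyl group: the subgroup of linear automorphisms of `V` generated by the
reflections `v ↦ v - ⟨α^∨, v⟩ • α` for roots `α`. -/
def weylGroup : Subgroup (V ≃ₗ[ℝ] V) :=
  Subgroup.closure {w | ∃ α ∈ P.R, ∀ v, w v = v - P.coroot α v • α}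

/-- The orbit `W.x` of a point `x` under the Weyl group. -/
def orbit (x : V) : Set V := {y | ∃ w ∈ P.weylGroup, w x = y}

/-- A dual half-apartment: `{v | f_i(v) ≤ k}` or `{v | f_i(v) ≥ k}` for a fundamental
coweight functional `f_i` (dual basis to the simple roots) and `k ∈ ℝ`. -/
def IsDualHalfApartment (H : Set V) : Prop :=
  ∃ (i : ι) (k : ℝ),
    H = {v | P.simple.coord i v ≤ k} ∨ H = {v | k ≤ P.simple.coord i v}

/-- The dual convex hull of `Y`: the intersection of all dual half-apartments
containing `Y` (the empty intersection being all of `V`). -/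
def dconv (Y : Set V) : Set V :=
  ⋂₀ {H | P.IsDualHalfApartment H ∧ Y ⊆ H}

/-- The fundamental Weyl chamber `C_f = {v | ⟨α_i^∨, v⟩ ≥ 0 for all i}`. -/
def fundChamber : Set V := {v | ∀ i, 0 ≤ P.coroot (P.simple i) v}

/-- The positive cone `C⁺`, the set of nonnegative linear combinations of simple roots. -/
def posCone : Set V :=
  {v | ∃ t : ι → ℝ, (∀ i, 0 ≤ t i) ∧ v = ∑ i, t i • P.simple i}

/-- Irreducibility: the base admits no partition into two nonempty mutually
orthogonal subsets. -/
def IsIrreducible : Prop :=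
  ∀ s : Set ι,
    (∀ i ∈ s, ∀ j ∉ s, P.coroot (P.simple i) (P.simple j) = 0 ∧
        P.coroot (P.simple j) (P.simple i) = 0) →
    s = ∅ ∨ s = Set.univ

end RootSystemWithBase

namespace RootSystemWithBase

variable {ι V : Type*} [Fintype ι] [AddCommGroup V] [Module ℝ V]
  (P : RootSystemWithBase ι V)

lemma root_ne_zero' {α : V} (hα : α ∈ P.R) : α ≠ 0 := by
  intro h
  have := P.coroot_self α hα
  rw [h] at this
  simp at this

/-- Off-diagonal Cartan entries are nonpositive. -/
lemma cartan_nonpos {i j : ι} (hij : i ≠ j) :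
    P.coroot (P.simple i) (P.simple j) ≤ 0 := by
  classical
  set c := P.coroot (P.simple i) (P.simple j) with hc
  have hβ : P.simple j - c • P.simple i ∈ P.R :=
    P.reflect_mem _ (P.simple_mem i) _ (P.simple_mem j)
  have hrep : ∀ k, P.simple.repr (P.simple j - c • P.simple i) k
      = (if j = k then (1:ℝ) else 0) - c * (if i = k then (1:ℝ) else 0) := by
    intro k
    simp [map_sub, map_smul, Module.Basis.repr_self, Finsupp.single_apply,
      Finsupp.smul_apply]
  rcases P.base_prop _ hβ with h | h
  · have hi := h i
    rw [hrep i, if_neg hij.symm, if_pos rfl] at hi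
    linarith
  · have hj := h j
    rw [hrep j, if_pos rfl, if_neg hij] at hj
    linarith

lemma weyl_mem_R {w : V ≃ₗ[ℝ] V} (hw : w ∈ P.weylGroup) {β : V} (hβ : β ∈ P.R) :
    w β ∈ P.R := by
  let H : Subgroup (V ≃ₗ[ℝ] V) :=
  { carrier := {u | ∀ γ ∈ P.R, u γ ∈ P.R ∧ u.symm γ ∈ P.R}
    one_mem' := fun γ hγ => ⟨hγ, hγ⟩
    mul_mem' := by
      intro a b ha hb γ hγ
      exact ⟨(ha _ (hb γ hγ).1).1, (hb _ (ha γ hγ).2).2⟩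
    inv_mem' := by
      intro a ha γ hγ
      exact ⟨(ha γ hγ).2, (ha γ hγ).1⟩ }
  have hle : P.weylGroup ≤ H := by
    rw [weylGroup, Subgroup.closure_le]
    rintro u ⟨α, hα, hu⟩ γ hγ
    have hinv : ∀ v, u (u v) = v := by
      intro v
      rw [hu (u v), hu v]
      have hf : P.coroot α (v - P.coroot α v • α) = - P.coroot α v := by
        rw [map_sub, map_smul, smul_eq_mul, P.coroot_self α hα]; ring
      rw [hf]
      module
    refine ⟨by rw [hu]; exact P.reflect_mem α hα γ hγ, ?_⟩
    have hs : u.symm γ = u γ := by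
      rw [LinearEquiv.symm_apply_eq, hinv]
    rw [hs, hu]
    exact P.reflect_mem α hα γ hγ
  exact ((hle hw) β hβ).1

lemma weylGroup_finite : (P.weylGroup : Set (V ≃ₗ[ℝ] V)).Finite := by
  have himg : ((fun w : V ≃ₗ[ℝ] V => fun i => w (P.simple i)) ''
      (P.weylGroup : Set (V ≃ₗ[ℝ] V))).Finite := by
    apply (Set.Finite.pi (fun _ : ι => P.finR)).subset
    rintro _ ⟨w, hw, rfl⟩
    intro i _
    exact P.weyl_mem_R hw (P.simple_mem i)
  refine Set.Finite.of_finite_image himg ?_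
  intro w₁ _ w₂ _ h
  have : (w₁ : V →ₗ[ℝ] V) = (w₂ : V →ₗ[ℝ] V) := by
    apply P.simple.ext
    intro i
    exact congrFun h i
  exact LinearEquiv.toLinearMap_injective this

/-- A Weyl-invariant inner product, obtained by averaging. -/
lemma exists_invariant_form : ∃ B : V →ₗ[ℝ] V →ₗ[ℝ] ℝ,
    (∀ x y, B x y = B y x) ∧ (∀ x, x ≠ 0 → 0 < B x x) ∧
    (∀ α ∈ P.R, ∀ x, P.coroot α x * B α α = 2 * B x α) := by
  classical
  haveI : Finite P.weylGroup := P.weylGroup_finite.to_subtype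
  haveI : Fintype P.weylGroup := Fintype.ofFinite _
  let B0 : V →ₗ[ℝ] V →ₗ[ℝ] ℝ := LinearMap.mk₂ ℝ
    (fun x y => ∑ i, P.simple.repr x i * P.simple.repr y i)
    (by intro x x' y; simp [add_mul, Finset.sum_add_distrib])
    (by intro c x y; simp [Finset.mul_sum, mul_assoc])
    (by intro x y y'; simp [mul_add, Finset.sum_add_distrib])
    (by intro c x y
        simp only [map_smul, Finsupp.smul_apply, smul_eq_mul, Finset.mul_sum]
        exact Finset.sum_congr rfl fun i _ => by ring)
  have hB0 : ∀ x y, B0 x y = ∑ i, P.simple.repr x i * P.simple.repr y i :=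
    fun x y => rfl
  have hB0symm : ∀ x y, B0 x y = B0 y x := by
    intro x y
    rw [hB0, hB0]
    exact Finset.sum_congr rfl fun i _ => mul_comm _ _
  have hB0nonneg : ∀ x, 0 ≤ B0 x x := by
    intro x
    rw [hB0]
    exact Finset.sum_nonneg fun i _ => mul_self_nonneg _
  have hB0pos : ∀ x, x ≠ 0 → 0 < B0 x x := by
    intro x hx
    rw [hB0]
    have : ∃ i, P.simple.repr x i ≠ 0 := by
      by_contra h
      push_neg at h
      apply hx
      have : P.simple.repr x = 0 := Finsupp.ext fun i => h i
      simpa using congrArg P.simple.repr.symm this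
    obtain ⟨i, hi⟩ := this
    exact Finset.sum_pos' (fun j _ => mul_self_nonneg _)
      ⟨i, Finset.mem_univ i, mul_self_pos.mpr hi⟩
  let B : V →ₗ[ℝ] V →ₗ[ℝ] ℝ :=
    ∑ w : P.weylGroup, B0.compl₁₂ (w : V ≃ₗ[ℝ] V).toLinearMap (w : V ≃ₗ[ℝ] V).toLinearMap
  have hB : ∀ x y, B x y
      = ∑ w : P.weylGroup, B0 ((w : V ≃ₗ[ℝ] V) x) ((w : V ≃ₗ[ℝ] V) y) := by
    intro x y
    simp [B, LinearMap.sum_apply, LinearMap.compl₁₂_apply]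
  have hinv : ∀ u : P.weylGroup, ∀ x y,
      B ((u : V ≃ₗ[ℝ] V) x) ((u : V ≃ₗ[ℝ] V) y) = B x y := by
    intro u x y
    rw [hB, hB]
    refine Fintype.sum_equiv (Equiv.mulRight u)
      (fun w : P.weylGroup => B0 ((w : V ≃ₗ[ℝ] V) ((u : V ≃ₗ[ℝ] V) x))
        ((w : V ≃ₗ[ℝ] V) ((u : V ≃ₗ[ℝ] V) y)))
      (fun w : P.weylGroup => B0 ((w : V ≃ₗ[ℝ] V) x) ((w : V ≃ₗ[ℝ] V) y)) ?_
    intro w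
    rfl
  refine ⟨B, ?_, ?_, ?_⟩
  · intro x y
    rw [hB, hB]
    exact Finset.sum_congr rfl fun w _ => hB0symm _ _
  · intro x hx
    rw [hB]
    refine Finset.sum_pos' (fun w _ => hB0nonneg _) ⟨1, Finset.mem_univ _, ?_⟩
    have h1 : ((1 : P.weylGroup) : V ≃ₗ[ℝ] V) x = x := rfl
    rw [h1]
    exact hB0pos x hx
  · intro α hα x
    have h2 : P.coroot α α = 2 := P.coroot_self α hα
    let s : V ≃ₗ[ℝ] V := Module.reflection h2
    have hsapp : ∀ v, s v = v - P.coroot α v • α := fun v => Module.reflection_apply v h2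
    have hsW : s ∈ P.weylGroup :=
      Subgroup.subset_closure ⟨α, hα, hsapp⟩
    have key := hinv ⟨s, hsW⟩ x α
    have hsx : ((⟨s, hsW⟩ : P.weylGroup) : V ≃ₗ[ℝ] V) x = x - P.coroot α x • α := hsapp x
    have hsα : ((⟨s, hsW⟩ : P.weylGroup) : V ≃ₗ[ℝ] V) α = -α := by
      rw [hsapp α, h2]
      module
    rw [hsx, hsα] at key
    have expand : B (x - P.coroot α x • α) (-α)
        = -(B x α) + P.coroot α x * B α α := by
      rw [map_sub, map_smul]
      simp only [LinearMap.sub_apply, LinearMap.smul_apply, map_neg, smul_eq_mul]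
      ring
    rw [expand] at key
    linarith

end RootSystemWithBase

/-- For an irreducible crystallographic root system, the fundamental Weyl chamber is
contained in the positive cone: every dominant vector is a nonnegative linear
combination of the simple roots. -/
theorem fundChamber_subset_posCone
    {ι V : Type*} [Fintype ι] [AddCommGroup V] [Module ℝ V]
    (P : RootSystemWithBase ι V) (hirr : P.IsIrreducible) :
    P.fundChamber ⊆ P.posCone := by
  classical
  intro v hv
  obtain ⟨B, hBsymm, hBpos, hBcoroot⟩ := P.exists_invariant_form
  set c : ι → ℝ := fun i => P.simple.repr v i with hc
  have hBααpos : ∀ i, 0 < B (P.simple i) (P.simple i) :=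
    fun i => hBpos _ (P.root_ne_zero' (P.simple_mem i))
  have hBij : ∀ i j, i ≠ j → B (P.simple i) (P.simple j) ≤ 0 := by
    intro i j hij
    have h := hBcoroot _ (P.simple_mem i) (P.simple j)
    have hcart := P.cartan_nonpos hij
    nlinarith [hBααpos i, hBsymm (P.simple i) (P.simple j)]
  have hBvα : ∀ j, 0 ≤ B v (P.simple j) := by
    intro j
    have h := hBcoroot _ (P.simple_mem j) v
    have hdom := hv j
    nlinarith [hBααpos j]
  -- main claim: all coordinates are nonnegative
  have claim : ∀ i, 0 ≤ c i := by
    by_contra hneg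
    push_neg at hneg
    set s : Finset ι := Finset.univ.filter (fun i => c i < 0) with hs
    obtain ⟨j₀, hj₀⟩ := hneg
    have hj₀s : j₀ ∈ s := by simp [hs, hj₀]
    set vm : V := ∑ i ∈ s, (-c i) • P.simple i with hvm
    have hvsum : v = ∑ i, c i • P.simple i := by
      rw [hc]
      exact (P.simple.sum_repr v).symm
    have hsplit : v + vm = ∑ i ∈ sᶜ, c i • P.simple i := by
      rw [hvsum, hvm, ← Finset.sum_compl_add_sum s (fun i => c i • P.simple i)]
      rw [add_assoc, ← Finset.sum_add_distrib]
      simp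
    -- B vm vm ≤ 0
    have hexp : B (v + vm) vm
        = ∑ i ∈ sᶜ, ∑ j ∈ s, c i * (-c j * B (P.simple i) (P.simple j)) := by
      rw [hsplit, hvm]
      simp only [map_sum, map_smul, LinearMap.sum_apply, LinearMap.smul_apply,
        smul_eq_mul, Finset.mul_sum]
      rw [Finset.sum_comm]
      exact Finset.sum_congr rfl fun i _ => Finset.sum_congr rfl fun j _ => by ring
    have hvm_negpart : B (v + vm) vm ≤ 0 := by
      rw [hexp]
      refine Finset.sum_nonpos fun i hi => Finset.sum_nonpos fun j hj => ?_
      have hci : 0 ≤ c i := by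
        have := Finset.mem_compl.mp hi
        simp [hs] at this
        linarith
      have hcj : c j < 0 := (Finset.mem_filter.mp hj).2
      have hij : i ≠ j := by
        intro h; rw [h] at hci; linarith
      exact mul_nonpos_of_nonneg_of_nonpos hci
        (mul_nonpos_of_nonneg_of_nonpos (by linarith) (hBij i j hij))
    have hvm_dom : 0 ≤ B v vm := by
      rw [hvm, map_sum]
      refine Finset.sum_nonneg fun j hj => ?_
      rw [map_smul]
      have hcj : c j < 0 := (Finset.mem_filter.mp hj).2
      simp only [smul_eq_mul]
      exact mul_nonneg (by linarith) (hBvα j)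
    have hBvmvm : B vm vm ≤ 0 := by
      have : B vm vm = B (v + vm) vm - B v vm := by
        rw [map_add]; simp
      rw [this]
      linarith
    have hvmne : vm ≠ 0 := by
      intro h
      have hrep : P.simple.repr vm j₀ = -c j₀ := by
        rw [hvm]
        simp only [map_sum, map_smul, Module.Basis.repr_self, Finsupp.smul_single,
          smul_eq_mul, mul_one]
        rw [Finsupp.finset_sum_apply]
        rw [Finset.sum_eq_single j₀]
        · simp
        · intro b _ hb
          simp [Finsupp.single_apply, hb]
        · intro hj; exact absurd hj₀s hj
      rw [h] at hrep
      simp at hrep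
      linarith
    exact absurd hBvmvm (not_le.mpr (hBpos vm hvmne))
  exact ⟨c, claim, by rw [hc]; exact (P.simple.sum_repr v).symm⟩
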